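/- Consider a permutation test over a data vector of length $2n$ where the test statistic $s$ depends only on the unordered pair (multiset of the first $n$ components, multiset of the last $n$ components) and is symmetric in the two groups. Then the p-value $\mathsf{pt}(s, \vec{y})$ equals the fraction, over the $\binom{2n}{n}$ equal-size bipartitions of the index set, of bipartitions $B$ with $s(\vec{y}) \leq s(\vec{y}_B)$ (where $\vec{y}_B$ rearranges $\vec{y}$ according to $B$); in particular, since the identity bipartition and its swap both contribute, $\mathsf{pt}(s, \vec{y}) \geq 2/\binom{2n}{n} = 1/\binom{2n-1}{n}$. -/

import Mathlib

open scoped Classical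

/-- One-tailed (signed) permutation test p-value. -/
noncomputable def pt {R : Type*} (m : ℕ) (s : (Fin m → R) → ℝ) (y : Fin m → R) : ℝ :=
  (∑ π : Equiv.Perm (Fin m), if s y ≤ s (y ∘ π) then (1 : ℝ) else 0) / (Nat.factorial m)

/-- Multiset of the first `n` components of a vector of length `n + n`. -/
def grp1 {R : Type*} (n : ℕ) (v : Fin (n + n) → R) : Multiset R :=
  (Finset.univ : Finset (Fin n)).val.map fun j => v (Fin.castAdd n j)

/-- Multiset of the last `n` components of a vector of length `n + n`. -/
def grp2 {R : Type*} (n : ℕ) (v : Fin (n + n) → R) : Multiset R :=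
  (Finset.univ : Finset (Fin n)).val.map fun j => v (Fin.natAdd n j)

/-- Rearrange `y` according to an equal-size bipartition `B`: the first `n`
components come from `B` and the last `n` from its complement. -/
noncomputable def arrange {R : Type*} (n : ℕ) (y : Fin (n + n) → R)
    (B : Finset (Fin (n + n))) : Fin (n + n) → R :=
  if h : B.card = n ∧ Bᶜ.card = n then
    Fin.addCases (fun a => y (B.orderEmbOfFin h.1 a)) (fun a => y (Bᶜ.orderEmbOfFin h.2 a))
  else y

/-! ### Auxiliary lemmas -/

/-- The bipartition associated to a permutation: image of the first half. -/
noncomputable def fhi (n : ℕ) (π : Equiv.Perm (Fin (n + n))) : Finset (Fin (n + n)) :=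
  Finset.image (fun j : Fin n => π (Fin.castAdd n j)) Finset.univ

lemma image_univ_val {α : Type*} [DecidableEq α] {n : ℕ} (f : Fin n → α)
    (hf : Function.Injective f) :
    (Finset.image f Finset.univ).val = Multiset.map f (Finset.univ : Finset (Fin n)).val :=
  Finset.image_val_of_injOn hf.injOn

lemma natAdd_inj {n m : ℕ} : Function.Injective (Fin.natAdd n : Fin m → Fin (n + m)) := by
  intro a b h
  have := congrArg Fin.val h
  simp only [Fin.coe_natAdd] at this
  exact Fin.ext (by omega)

lemma card_fhi (n : ℕ) (π : Equiv.Perm (Fin (n + n))) : (fhi n π).card = n := by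
  rw [fhi, Finset.card_image_of_injective _ (fun a b h => Fin.castAdd_injective _ _ (π.injective h))]
  simp

lemma compl_card {n : ℕ} {B : Finset (Fin (n + n))} (hB : B.card = n) : Bᶜ.card = n := by
  rw [Finset.card_compl, hB]
  simp

lemma image_natAdd_eq_compl (n : ℕ) (π : Equiv.Perm (Fin (n + n))) :
    Finset.image (fun j : Fin n => π (Fin.natAdd n j)) Finset.univ = (fhi n π)ᶜ := by
  ext x
  simp only [Finset.mem_image, Finset.mem_univ, true_and, Finset.mem_compl, fhi]
  constructor
  · rintro ⟨j, rfl⟩ ⟨k, hk⟩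
    have := π.injective hk
    have h1 : (Fin.castAdd n k : Fin (n+n)).val = k.val := rfl
    have h2 : (Fin.natAdd n j : Fin (n+n)).val = n + j.val := rfl
    have := congrArg Fin.val this
    rw [h1, h2] at this
    omega
  · intro hx
    obtain ⟨z, rfl⟩ := π.surjective x
    obtain ⟨w, rfl⟩ := finSumFinEquiv.surjective z
    cases w with
    | inl j => exact absurd ⟨j, by rw [finSumFinEquiv_apply_left]⟩ hx
    | inr j => exact ⟨j, by rw [finSumFinEquiv_apply_right]⟩

lemma grp1_comp {R : Type*} (n : ℕ) (y : Fin (n + n) → R) (π : Equiv.Perm (Fin (n + n))) :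
    grp1 n (y ∘ π) = Multiset.map y (fhi n π).val := by
  rw [fhi, image_univ_val _ (fun a b h => Fin.castAdd_injective _ _ (π.injective h)),
    Multiset.map_map, grp1]
  rfl

lemma grp2_comp {R : Type*} (n : ℕ) (y : Fin (n + n) → R) (π : Equiv.Perm (Fin (n + n))) :
    grp2 n (y ∘ π) = Multiset.map y ((fhi n π)ᶜ).val := by
  rw [← image_natAdd_eq_compl,
    image_univ_val _ (fun a b h => natAdd_inj (π.injective h)), Multiset.map_map, grp2]
  rfl

lemma univ_val_map_orderEmbOfFin {N n : ℕ} (B : Finset (Fin N)) (h : B.card = n) :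
    Multiset.map (B.orderEmbOfFin h) (Finset.univ : Finset (Fin n)).val = B.val := by
  have himg : Finset.image (⇑(B.orderEmbOfFin h)) Finset.univ = B := by
    apply Finset.coe_injective
    rw [Finset.coe_image, Finset.coe_univ, Set.image_univ, Finset.range_orderEmbOfFin]
  rw [← image_univ_val _ (B.orderEmbOfFin h).injective, himg]

lemma grp1_arrange {R : Type*} (n : ℕ) (y : Fin (n + n) → R) (B : Finset (Fin (n + n)))
    (hB : B.card = n) : grp1 n (arrange n y B) = Multiset.map y B.val := by
  have h : B.card = n ∧ Bᶜ.card = n := ⟨hB, compl_card hB⟩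
  rw [arrange, dif_pos h, grp1]
  simp only [Fin.addCases_left]
  rw [show (fun j => y (B.orderEmbOfFin h.1 j)) = y ∘ ⇑(B.orderEmbOfFin h.1) from rfl,
    ← Multiset.map_map, univ_val_map_orderEmbOfFin]

lemma grp2_arrange {R : Type*} (n : ℕ) (y : Fin (n + n) → R) (B : Finset (Fin (n + n)))
    (hB : B.card = n) : grp2 n (arrange n y B) = Multiset.map y Bᶜ.val := by
  have h : B.card = n ∧ Bᶜ.card = n := ⟨hB, compl_card hB⟩
  rw [arrange, dif_pos h, grp2]
  simp only [Fin.addCases_right]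
  rw [show (fun j => y (Bᶜ.orderEmbOfFin h.2 j)) = y ∘ ⇑(Bᶜ.orderEmbOfFin h.2) from rfl,
    ← Multiset.map_map, univ_val_map_orderEmbOfFin]

lemma grp1_flip {R : Type*} (n : ℕ) (v : Fin (n + n) → R) :
    grp1 n (v ∘ ⇑finAddFlip) = grp2 n v := by
  refine Multiset.map_congr rfl fun j _ => ?_
  rw [Function.comp_apply, finAddFlip_apply_castAdd]

lemma grp2_flip {R : Type*} (n : ℕ) (v : Fin (n + n) → R) :
    grp2 n (v ∘ ⇑finAddFlip) = grp1 n v := by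
  refine Multiset.map_congr rfl fun j _ => ?_
  rw [Function.comp_apply, finAddFlip_apply_natAdd]

lemma exists_orderEmbOfFin {N n : ℕ} (B : Finset (Fin N)) (h : B.card = n) {x : Fin N}
    (hx : x ∈ B) : ∃ i, B.orderEmbOfFin h i = x := by
  have : x ∈ Set.range (B.orderEmbOfFin h) := by
    rw [Finset.range_orderEmbOfFin]; exact hx
  exact this

noncomputable def toPerm (n : ℕ) (B : Finset (Fin (n + n))) (h1 : B.card = n)
    (h2 : Bᶜ.card = n) (p : Equiv.Perm (Fin n) × Equiv.Perm (Fin n)) :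
    Equiv.Perm (Fin (n + n)) :=
  Equiv.ofBijective
    (Fin.addCases (fun a => B.orderEmbOfFin h1 (p.1 a)) (fun a => Bᶜ.orderEmbOfFin h2 (p.2 a)))
    (by
      rw [Fintype.bijective_iff_injective_and_card]
      refine ⟨?_, rfl⟩
      intro x z
      refine Fin.addCases (fun a => Fin.addCases (fun b => ?_) (fun b => ?_) z)
        (fun a => Fin.addCases (fun b => ?_) (fun b => ?_) z) x <;>
        simp only [Fin.addCases_left, Fin.addCases_right] <;> intro h
      · exact congrArg _ (p.1.injective ((B.orderEmbOfFin h1).injective h))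
      · exact absurd (h ▸ Finset.orderEmbOfFin_mem B h1 (p.1 a))
          (Finset.mem_compl.mp (Finset.orderEmbOfFin_mem Bᶜ h2 (p.2 b)))
      · have hm : (B.orderEmbOfFin h1) (p.1 b) ∈ Bᶜ := h ▸ Finset.orderEmbOfFin_mem Bᶜ h2 (p.2 a)
        exact absurd (Finset.orderEmbOfFin_mem B h1 (p.1 b)) (Finset.mem_compl.mp hm)
      · exact congrArg _ (p.2.injective ((Bᶜ.orderEmbOfFin h2).injective h)))

lemma toPerm_castAdd (n : ℕ) (B : Finset (Fin (n + n))) (h1 : B.card = n) (h2 : Bᶜ.card = n)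
    (p : Equiv.Perm (Fin n) × Equiv.Perm (Fin n)) (a : Fin n) :
    toPerm n B h1 h2 p (Fin.castAdd n a) = B.orderEmbOfFin h1 (p.1 a) := by
  simp only [toPerm, Equiv.ofBijective_apply, Fin.addCases_left]

lemma toPerm_natAdd (n : ℕ) (B : Finset (Fin (n + n))) (h1 : B.card = n) (h2 : Bᶜ.card = n)
    (p : Equiv.Perm (Fin n) × Equiv.Perm (Fin n)) (a : Fin n) :
    toPerm n B h1 h2 p (Fin.natAdd n a) = Bᶜ.orderEmbOfFin h2 (p.2 a) := by
  simp only [toPerm, Equiv.ofBijective_apply, Fin.addCases_right]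

lemma fhi_toPerm (n : ℕ) (B : Finset (Fin (n + n))) (h1 : B.card = n) (h2 : Bᶜ.card = n)
    (p : Equiv.Perm (Fin n) × Equiv.Perm (Fin n)) : fhi n (toPerm n B h1 h2 p) = B := by
  ext x
  simp only [fhi, Finset.mem_image, Finset.mem_univ, true_and]
  constructor
  · rintro ⟨j, rfl⟩
    rw [toPerm_castAdd]
    exact Finset.orderEmbOfFin_mem B h1 _
  · intro hx
    obtain ⟨i, hi⟩ := exists_orderEmbOfFin B h1 hx
    exact ⟨p.1⁻¹ i, by rw [toPerm_castAdd]; simpa using hi⟩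

lemma fiber_card (n : ℕ) (B : Finset (Fin (n + n))) (hB : B.card = n) :
    (Finset.univ.filter fun π : Equiv.Perm (Fin (n + n)) => fhi n π = B).card
      = n.factorial * n.factorial := by
  have h2 := compl_card hB
  have hcb : (Finset.univ : Finset (Equiv.Perm (Fin n) × Equiv.Perm (Fin n))).card
      = (Finset.univ.filter fun π : Equiv.Perm (Fin (n + n)) => fhi n π = B).card := by
    refine Finset.card_bij (fun p _ => toPerm n B hB h2 p) ?_ ?_ ?_
    · intro p _
      rw [Finset.mem_filter]
      exact ⟨Finset.mem_univ _, fhi_toPerm n B hB h2 p⟩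
    · intro p _ q _ h
      have h' : toPerm n B hB h2 p = toPerm n B hB h2 q := h
      have hσ : p.1 = q.1 := by
        apply Equiv.ext; intro a
        apply (B.orderEmbOfFin hB).injective
        rw [← toPerm_castAdd n B hB h2 p a, ← toPerm_castAdd n B hB h2 q a, h']
      have hτ : p.2 = q.2 := by
        apply Equiv.ext; intro a
        apply (Bᶜ.orderEmbOfFin h2).injective
        rw [← toPerm_natAdd n B hB h2 p a, ← toPerm_natAdd n B hB h2 q a, h']
      exact Prod.ext hσ hτ
    · intro π hπ
      rw [Finset.mem_filter] at hπ
      have hmem1 : ∀ j : Fin n, π (Fin.castAdd n j) ∈ B := by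
        intro j
        rw [← hπ.2]
        exact Finset.mem_image_of_mem _ (Finset.mem_univ j)
      have hmem2 : ∀ j : Fin n, π (Fin.natAdd n j) ∈ Bᶜ := by
        intro j
        rw [← hπ.2, ← image_natAdd_eq_compl]
        exact Finset.mem_image_of_mem _ (Finset.mem_univ j)
      set f1 : Fin n → Fin n :=
        fun j => (B.orderIsoOfFin hB).symm ⟨π (Fin.castAdd n j), hmem1 j⟩ with hf1def
      set f2 : Fin n → Fin n :=
        fun j => (Bᶜ.orderIsoOfFin h2).symm ⟨π (Fin.natAdd n j), hmem2 j⟩ with hf2def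
      have hf1 : ∀ j, B.orderEmbOfFin hB (f1 j) = π (Fin.castAdd n j) := by
        intro j
        rw [hf1def, ← Finset.coe_orderIsoOfFin_apply, OrderIso.apply_symm_apply]
      have hf2 : ∀ j, Bᶜ.orderEmbOfFin h2 (f2 j) = π (Fin.natAdd n j) := by
        intro j
        rw [hf2def, ← Finset.coe_orderIsoOfFin_apply, OrderIso.apply_symm_apply]
      have hf1inj : Function.Injective f1 := by
        intro a b h
        have := congrArg (B.orderEmbOfFin hB) h
        rw [hf1, hf1] at this
        exact Fin.castAdd_injective _ _ (π.injective this)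
      have hf2inj : Function.Injective f2 := by
        intro a b h
        have := congrArg (Bᶜ.orderEmbOfFin h2) h
        rw [hf2, hf2] at this
        exact natAdd_inj (π.injective this)
      refine ⟨(Equiv.ofBijective f1 (Finite.injective_iff_bijective.mp hf1inj),
        Equiv.ofBijective f2 (Finite.injective_iff_bijective.mp hf2inj)), Finset.mem_univ _, ?_⟩
      apply Equiv.ext; intro x
      refine Fin.addCases (fun a => ?_) (fun a => ?_) x
      · rw [toPerm_castAdd]
        exact hf1 a
      · rw [toPerm_natAdd]
        exact hf2 a
  rw [← hcb, Finset.card_univ, Fintype.card_prod, Fintype.card_perm, Fintype.card_fin]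

lemma choose_two_mul_eq (n : ℕ) (hn : 0 < n) :
    (n + n).choose n = 2 * (n + n - 1).choose n := by
  obtain ⟨m, rfl⟩ : ∃ m, n = m + 1 := ⟨n - 1, by omega⟩
  have h1 : (m + 1) + (m + 1) = (2 * m + 1) + 1 := by ring
  rw [h1]
  have h2 : 2 * m + 1 + 1 - 1 = 2 * m + 1 := by omega
  rw [h2, Nat.choose_succ_succ]
  have hsymm := Nat.choose_symm (n := 2 * m + 1) (k := m + 1) (by omega)
  have hm : 2 * m + 1 - (m + 1) = m := by omega
  rw [hm] at hsymm
  simp only [Nat.succ_eq_add_one] at *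
  omega

theorem pt_group_based_eq_bipartition_fraction
    {R : Type*} (n : ℕ) (hn : 0 < n) (s : (Fin (n + n) → R) → ℝ)
    (hgb : ∀ v w : Fin (n + n) → R, grp1 n v = grp1 n w → grp2 n v = grp2 n w → s v = s w)
    (hsym : ∀ v : Fin (n + n) → R, s (v ∘ ⇑finAddFlip) = s v)
    (y : Fin (n + n) → R) :
    pt (n + n) s y =
      ((((Finset.univ : Finset (Fin (n + n))).powersetCard n).filter
          fun B => s y ≤ s (arrange n y B)).card : ℝ) / ((n + n).choose n : ℝ) ∧
    1 / ((n + n - 1).choose n : ℝ) ≤ pt (n + n) s y := by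
  classical
  have hmemP : ∀ B : Finset (Fin (n + n)),
      B ∈ (Finset.univ : Finset (Fin (n + n))).powersetCard n ↔ B.card = n := by
    intro B; rw [Finset.mem_powersetCard_univ]
  have hs_fiber : ∀ B : Finset (Fin (n + n)), B.card = n →
      ∀ π : Equiv.Perm (Fin (n + n)), fhi n π = B → s (y ∘ ⇑π) = s (arrange n y B) := by
    intro B hB π hπ
    apply hgb
    · rw [grp1_comp, grp1_arrange n y B hB, hπ]
    · rw [grp2_comp, grp2_arrange n y B hB, hπ]
  have hid : (fhi n (1 : Equiv.Perm (Fin (n + n)))).card = n := card_fhi n 1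
  have hsy : s (arrange n y (fhi n 1)) = s y := by
    have h := hs_fiber _ hid 1 rfl
    rw [← h]
    congr 1
  have hs_compl : ∀ B : Finset (Fin (n + n)), B.card = n →
      s (arrange n y Bᶜ) = s (arrange n y B) := by
    intro B hB
    have h1 : s (arrange n y Bᶜ) = s (arrange n y B ∘ ⇑finAddFlip) := by
      apply hgb
      · rw [grp1_arrange n y Bᶜ (compl_card hB), grp1_flip, grp2_arrange n y B hB]
      · rw [grp2_arrange n y Bᶜ (compl_card hB), grp2_flip, grp1_arrange n y B hB, compl_compl]
    rw [h1, hsym]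
  set F : Finset (Finset (Fin (n + n))) :=
    ((Finset.univ : Finset (Fin (n + n))).powersetCard n).filter
      (fun B => s y ≤ s (arrange n y B)) with hF
  have hsum : (∑ π : Equiv.Perm (Fin (n + n)), if s y ≤ s (y ∘ ⇑π) then (1 : ℝ) else 0)
      = (n.factorial * n.factorial : ℝ) * F.card := by
    rw [← Finset.sum_fiberwise_of_maps_to (g := fhi n)
      (t := (Finset.univ : Finset (Fin (n + n))).powersetCard n)
      (fun π _ => (hmemP _).mpr (card_fhi n π))]
    have hinner : ∀ B ∈ (Finset.univ : Finset (Fin (n + n))).powersetCard n,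
        (∑ π ∈ Finset.univ.filter (fun π => fhi n π = B),
            if s y ≤ s (y ∘ ⇑π) then (1 : ℝ) else 0)
          = (n.factorial * n.factorial : ℝ) *
            (if s y ≤ s (arrange n y B) then (1 : ℝ) else 0) := by
      intro B hBmem
      have hB := (hmemP B).mp hBmem
      calc (∑ π ∈ Finset.univ.filter (fun π => fhi n π = B),
              if s y ≤ s (y ∘ ⇑π) then (1 : ℝ) else 0)
          = ∑ _π ∈ Finset.univ.filter (fun π : Equiv.Perm (Fin (n + n)) => fhi n π = B),
              (if s y ≤ s (arrange n y B) then (1 : ℝ) else 0) :=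
            Finset.sum_congr rfl (fun π hπ => by
              rw [Finset.mem_filter] at hπ
              rw [hs_fiber B hB π hπ.2])
        _ = _ := by rw [Finset.sum_const, fiber_card n B hB, nsmul_eq_mul, Nat.cast_mul]
    rw [Finset.sum_congr rfl hinner, ← Finset.mul_sum, Finset.sum_boole, hF]
  have hfact : ((n + n).factorial : ℝ) = ((n + n).choose n : ℝ) * n.factorial * n.factorial := by
    have h := Nat.choose_mul_factorial_mul_factorial (Nat.le_add_left n n)
    have h' : n + n - n = n := by omega
    rw [h'] at h
    exact_mod_cast h.symm
  have hchoose_pos : (0 : ℝ) < ((n + n).choose n : ℝ) := by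
    exact_mod_cast Nat.choose_pos (Nat.le_add_left n n)
  have hfac_pos : (0 : ℝ) < (n.factorial : ℝ) := by exact_mod_cast n.factorial_pos
  have hpt : pt (n + n) s y = (F.card : ℝ) / ((n + n).choose n : ℝ) := by
    rw [pt, hsum, hfact]
    field_simp
  refine ⟨hpt, ?_⟩
  have hBmem0 : fhi n 1 ∈ F := by
    rw [hF, Finset.mem_filter]
    exact ⟨(hmemP _).mpr hid, le_of_eq hsy.symm⟩
  have hBmem1 : (fhi n 1)ᶜ ∈ F := by
    rw [hF, Finset.mem_filter]
    refine ⟨(hmemP _).mpr (compl_card hid), ?_⟩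
    rw [hs_compl _ hid, hsy]
  have hne : fhi n 1 ≠ (fhi n 1)ᶜ := by
    intro h
    obtain ⟨x, hx⟩ := Finset.card_pos.mp (show 0 < (fhi n 1).card by rw [hid]; exact hn)
    exact (Finset.mem_compl.mp (h ▸ hx)) hx
  have h2le : 2 ≤ F.card := by
    have hsub : ({fhi n 1, (fhi n 1)ᶜ} : Finset (Finset (Fin (n + n)))) ⊆ F := by
      intro z hz
      rcases Finset.mem_insert.mp hz with rfl | hz
      · exact hBmem0
      · rw [Finset.mem_singleton] at hz
        subst hz
        exact hBmem1
    calc 2 = ({fhi n 1, (fhi n 1)ᶜ} : Finset (Finset (Fin (n + n)))).card := by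
            rw [Finset.card_insert_of_notMem (by simp [hne]), Finset.card_singleton]
      _ ≤ F.card := Finset.card_le_card hsub
  have hcpos' : (0 : ℝ) < ((n + n - 1).choose n : ℝ) := by
    exact_mod_cast Nat.choose_pos (by omega)
  rw [hpt, div_le_div_iff₀ hcpos' hchoose_pos, one_mul]
  have hch2 : ((n + n).choose n : ℝ) = 2 * ((n + n - 1).choose n : ℝ) := by
    exact_mod_cast choose_two_mul_eq n hn
  rw [hch2]
  have h2le' : (2 : ℝ) ≤ (F.card : ℝ) := by exact_mod_cast h2le
  nlinarith
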